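/- For every non-autonomous dynamical system f on a compact metric space M and all i, j ∈ ℤ, one has H_i(f) = H_j(f); i.e., the sequence (H_i(f))_{i∈ℤ} is constant. -/

import Mathlib

open Filter Topology Set

variable {M : Type*} {N : Type*}

/-- The `n`-th composition `f_i^n = f_{i+n-1} ∘ ⋯ ∘ f_i` of a non-autonomous
dynamical system `f = (f_i)_{i ∈ ℤ}` of homeomorphisms of `M`. -/
def nsIter [TopologicalSpace M] (f : ℤ → M ≃ₜ M) (i : ℤ) : ℕ → M → M
  | 0 => id
  | n + 1 => (f (i + n)) ∘ nsIter f i n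

/-- `K` is an `(n, ε)`-spanning set for `f` at time `i`. -/
def IsSpanningSet [PseudoMetricSpace M] (f : ℤ → M ≃ₜ M) (i : ℤ) (n : ℕ) (ε : ℝ)
    (K : Set M) : Prop :=
  ∀ x : M, ∃ y ∈ K, ∀ j < n, dist (nsIter f i j x) (nsIter f i j y) < ε

/-- `E` is an `(n, ε)`-separated set for `f` at time `i`. -/
def IsSeparatedSet [PseudoMetricSpace M] (f : ℤ → M ≃ₜ M) (i : ℤ) (n : ℕ) (ε : ℝ)
    (E : Set M) : Prop :=
  ∀ x ∈ E, ∀ y ∈ E, x ≠ y → ∃ j < n, ε < dist (nsIter f i j x) (nsIter f i j y)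

/-- `r[n,i](ε,f)`: the smallest cardinality of a finite `(n, ε)`-spanning set at time `i`. -/
noncomputable def rSpan [PseudoMetricSpace M] (f : ℤ → M ≃ₜ M) (i : ℤ) (n : ℕ) (ε : ℝ) : ℕ :=
  sInf {k | ∃ K : Finset M, K.card = k ∧ IsSpanningSet f i n ε ↑K}

/-- `s[n,i](ε,f)`: the largest cardinality of an `(n, ε)`-separated set at time `i`. -/
noncomputable def sSep [PseudoMetricSpace M] (f : ℤ → M ≃ₜ M) (i : ℤ) (n : ℕ) (ε : ℝ) : ℕ :=
  sSup {k | ∃ E : Finset M, E.card = k ∧ IsSeparatedSet f i n ε ↑E}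

/-- `r[i](ε,f) = limsup_{n → ∞} (1/n) log r[n,i](ε,f)`. -/
noncomputable def rGrowth [PseudoMetricSpace M] (f : ℤ → M ≃ₜ M) (i : ℤ) (ε : ℝ) : EReal :=
  Filter.atTop.limsup fun n : ℕ => ((Real.log (rSpan f i n ε) / n : ℝ) : EReal)

/-- `s[i](ε,f) = limsup_{n → ∞} (1/n) log s[n,i](ε,f)`. -/
noncomputable def sGrowth [PseudoMetricSpace M] (f : ℤ → M ≃ₜ M) (i : ℤ) (ε : ℝ) : EReal :=
  Filter.atTop.limsup fun n : ℕ => ((Real.log (sSep f i n ε) / n : ℝ) : EReal)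

/-- The topological entropy `H_i(f) = lim_{ε → 0⁺} r[i](ε,f)`; since `ε ↦ r[i](ε,f)` is
antitone, this one-sided limit equals the supremum over `ε > 0`. -/
noncomputable def nsEntropy [PseudoMetricSpace M] (f : ℤ → M ≃ₜ M) (i : ℤ) : EReal :=
  ⨆ (ε : ℝ) (_ : 0 < ε), rGrowth f i ε

/-! ### Auxiliary lemmas -/

lemma aux_limsup_shift_div_le {u : ℕ → ℝ} (hu : ∀ n, 0 ≤ u n) :
    (atTop.limsup fun n : ℕ => ((u (n+1) / n : ℝ) : EReal)) ≤
    atTop.limsup fun n : ℕ => ((u n / n : ℝ) : EReal) := by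
  set L := atTop.limsup (fun n : ℕ => ((u n / n : ℝ) : EReal)) with hL
  rcases eq_top_or_lt_top L with htop | htop
  · rw [htop]; exact le_top
  have hL0 : (0 : EReal) ≤ L :=
    le_limsup_of_frequently_le (Frequently.of_forall fun n =>
      EReal.coe_nonneg.2 (div_nonneg (hu n) (Nat.cast_nonneg n)))
  lift L to ℝ using ⟨htop.ne, fun h => by simp [h] at hL0⟩ with l hl
  by_contra hcon
  push_neg at hcon
  obtain ⟨c, hc1, hc2⟩ := EReal.exists_between_coe_real hcon
  have hlc : l < c := by exact_mod_cast hc1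
  have hl0 : (0:ℝ) ≤ l := by exact_mod_cast hL0
  set c₁ : ℝ := (l + c) / 2 with hc₁def
  have hlc₁ : l < c₁ := by simp only [hc₁def]; linarith
  have hc₁c : c₁ < c := by simp only [hc₁def]; linarith
  have hc₁0 : 0 < c₁ := by linarith
  have hev : ∀ᶠ n in atTop, ((u n / n : ℝ) : EReal) < (c₁ : EReal) :=
    eventually_lt_of_limsup_lt (by rw [← hL]; exact_mod_cast hlc₁)
  have hev2 : ∀ᶠ n : ℕ in atTop, u n / n < c₁ := hev.mono fun n h => by exact_mod_cast h
  have hev3 : ∀ᶠ n : ℕ in atTop, u (n+1) / (n+1 : ℝ) < c₁ := by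
    have := (tendsto_add_atTop_nat 1).eventually hev2
    exact this.mono fun n h => by push_cast at h ⊢; exact h
  obtain ⟨N0, hN0⟩ := exists_nat_ge (c₁ / (c - c₁))
  have key : ∀ᶠ n : ℕ in atTop, ((u (n+1) / n : ℝ) : EReal) ≤ (c : EReal) := by
    filter_upwards [hev3, eventually_ge_atTop (max 1 N0)] with n hn hnN
    have hn1 : 1 ≤ n := le_of_max_le_left hnN
    have hnN0 : (N0 : ℝ) ≤ n := Nat.cast_le.2 (le_of_max_le_right hnN)
    have hnpos : (0:ℝ) < n := by exact_mod_cast hn1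
    have hu1 : u (n+1) < c₁ * (n+1) := by
      have hp : (0:ℝ) < (n:ℝ) + 1 := by positivity
      calc u (n+1) = u (n+1) / ((n:ℝ)+1) * ((n:ℝ)+1) := by field_simp
        _ < c₁ * ((n:ℝ)+1) := by
            apply mul_lt_mul_of_pos_right _ hp
            exact hn
    have : u (n+1) / n ≤ c := by
      rw [div_le_iff₀ hnpos]
      have h1 : c₁ * ((n:ℝ)+1) = c₁ * n + c₁ := by ring
      have h2 : c₁ ≤ (c - c₁) * n := by
        have : c₁ / (c - c₁) ≤ (n:ℝ) := le_trans hN0 hnN0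
        rw [div_le_iff₀ (by linarith)] at this; linarith
      nlinarith
    exact_mod_cast this
  exact absurd (limsup_le_of_le (by isBoundedDefault) key) (not_le.2 hc2)

section Aux

variable [MetricSpace M]

lemma nsIter_succ_eq (f : ℤ → M ≃ₜ M) (i : ℤ) : ∀ (j : ℕ) (w : M),
    nsIter f i (j + 1) w = nsIter f (i + 1) j (f i w) := by
  intro j
  induction j with
  | zero => intro w; simp [nsIter]
  | succ j ih =>
    intro w
    have h1 : nsIter f i (j + 1 + 1) w = f (i + ((j:ℤ)+1)) (nsIter f i (j+1) w) := by
      show f (i + ((j+1 : ℕ) : ℤ)) (nsIter f i (j+1) w) = _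
      push_cast; rfl
    have h2 : nsIter f (i+1) (j+1) (f i w) = f ((i+1) + (j:ℤ)) (nsIter f (i+1) j (f i w)) := rfl
    rw [h1, h2, ih]
    congr 2
    ring

lemma nsIter_continuous (f : ℤ → M ≃ₜ M) (i : ℤ) : ∀ n, Continuous (nsIter f i n)
  | 0 => continuous_id
  | n+1 => ((f (i+n)).continuous).comp (nsIter_continuous f i n)

variable [CompactSpace M]

lemma exists_spanning_finset (f : ℤ → M ≃ₜ M) (i : ℤ) (n : ℕ) {ε : ℝ} (hε : 0 < ε) :
    ∃ K : Finset M, IsSpanningSet f i n ε ↑K := by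
  obtain ⟨t, ht⟩ := IsCompact.elim_finite_subcover (isCompact_univ (X := M))
    (fun y : M => ⋂ j ∈ Finset.range n, {x | dist (nsIter f i j x) (nsIter f i j y) < ε})
    (fun y => isOpen_biInter_finset fun j _ =>
      isOpen_lt ((nsIter_continuous f i j).dist continuous_const) continuous_const)
    (fun x _ => Set.mem_iUnion.2 ⟨x, Set.mem_iInter₂.2 fun j _ => by simp [hε]⟩)
  refine ⟨t, fun x => ?_⟩
  obtain ⟨y, hy, hxy⟩ := Set.mem_iUnion₂.1 (ht (Set.mem_univ x))
  exact ⟨y, hy, fun j hj => Set.mem_iInter₂.1 hxy j (Finset.mem_range.2 hj)⟩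

lemma rSpan_mem (f : ℤ → M ≃ₜ M) (i : ℤ) (n : ℕ) {ε : ℝ} (hε : 0 < ε) :
    ∃ K : Finset M, K.card = rSpan f i n ε ∧ IsSpanningSet f i n ε ↑K := by
  have hne : {k | ∃ K : Finset M, K.card = k ∧ IsSpanningSet f i n ε ↑K}.Nonempty := by
    obtain ⟨K, hK⟩ := exists_spanning_finset f i n hε
    exact ⟨K.card, K, rfl, hK⟩
  exact Nat.sInf_mem hne

omit [CompactSpace M] in
lemma rSpan_le (f : ℤ → M ≃ₜ M) (i : ℤ) (n : ℕ) (ε : ℝ) (K : Finset M)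
    (hK : IsSpanningSet f i n ε ↑K) : rSpan f i n ε ≤ K.card :=
  Nat.sInf_le ⟨K, rfl, hK⟩

lemma one_le_rSpan [Nonempty M] (f : ℤ → M ≃ₜ M) (i : ℤ) (n : ℕ) {ε : ℝ} (hε : 0 < ε) :
    1 ≤ rSpan f i n ε := by
  obtain ⟨K, hcard, hspan⟩ := rSpan_mem f i n hε
  obtain ⟨y, hy, -⟩ := hspan (Classical.arbitrary M)
  rw [← hcard]
  exact Finset.card_pos.2 ⟨y, hy⟩

lemma rSpan_succ_le (f : ℤ → M ≃ₜ M) (i : ℤ) (n : ℕ) {ε : ℝ} (hε : 0 < ε) :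
    rSpan f (i+1) n ε ≤ rSpan f i (n+1) ε := by
  classical
  obtain ⟨K, hcard, hspan⟩ := rSpan_mem f i (n+1) hε
  refine le_trans (rSpan_le f (i+1) n ε (K.image (f i)) ?_) (hcard ▸ Finset.card_image_le)
  intro x
  obtain ⟨y, hy, h⟩ := hspan ((f i).symm x)
  refine ⟨f i y, Finset.mem_coe.2 (Finset.mem_image_of_mem _ hy), fun j hj => ?_⟩
  have e1 : nsIter f (i+1) j (f i y) = nsIter f i (j+1) y := (nsIter_succ_eq f i j y).symm
  have e2 : nsIter f (i+1) j x = nsIter f i (j+1) ((f i).symm x) := by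
    conv_lhs => rw [← (f i).apply_symm_apply x]
    exact (nsIter_succ_eq f i j _).symm
  rw [e1, e2]
  exact h (j+1) (by omega)

lemma exists_rSpan_ge (f : ℤ → M ≃ₜ M) (i : ℤ) {ε : ℝ} (hε : 0 < ε) :
    ∃ ε' : ℝ, 0 < ε' ∧ ∀ n : ℕ, rSpan f i (n+2) ε ≤ rSpan f (i+1) (n+1) ε' := by
  classical
  obtain ⟨δ, hδ, hδ'⟩ := Metric.uniformContinuous_iff.1
    (CompactSpace.uniformContinuous_of_continuous (f i).symm.continuous) ε hε
  refine ⟨min ε δ, lt_min hε hδ, fun n => ?_⟩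
  obtain ⟨K, hcard, hspan⟩ := rSpan_mem f (i+1) (n+1) (lt_min hε hδ)
  refine le_trans (rSpan_le f i (n+2) ε (K.image (f i).symm) ?_)
    (hcard ▸ Finset.card_image_le)
  intro x
  obtain ⟨y, hy, h⟩ := hspan (f i x)
  refine ⟨(f i).symm y, Finset.mem_coe.2 (Finset.mem_image_of_mem _ hy), fun j hj => ?_⟩
  rcases j with _ | j
  · have h0 : dist (f i x) y < δ := lt_of_lt_of_le (h 0 (by omega)) (min_le_right _ _)
    have := hδ' h0
    rwa [(f i).symm_apply_apply] at this
  · have e1 : nsIter f i (j+1) x = nsIter f (i+1) j (f i x) := nsIter_succ_eq f i j x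
    have e2 : nsIter f i (j+1) ((f i).symm y) = nsIter f (i+1) j y := by
      rw [nsIter_succ_eq f i j, (f i).apply_symm_apply]
    rw [e1, e2]
    exact lt_of_lt_of_le (h j (by omega)) (min_le_left _ _)

variable [Nonempty M]

lemma rSpan_real_pos (f : ℤ → M ≃ₜ M) (i : ℤ) (n : ℕ) {ε : ℝ} (hε : 0 < ε) :
    (0:ℝ) < (rSpan f i n ε : ℝ) := by
  exact_mod_cast one_le_rSpan f i n hε

lemma log_rSpan_nonneg (f : ℤ → M ≃ₜ M) (i : ℤ) (n : ℕ) {ε : ℝ} (hε : 0 < ε) :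
    0 ≤ Real.log (rSpan f i n ε) :=
  Real.log_nonneg (by exact_mod_cast one_le_rSpan f i n hε)

lemma rGrowth_succ_le (f : ℤ → M ≃ₜ M) (i : ℤ) {ε : ℝ} (hε : 0 < ε) :
    rGrowth f (i+1) ε ≤ rGrowth f i ε := by
  have step1 : rGrowth f (i+1) ε ≤
      atTop.limsup fun n : ℕ => ((Real.log (rSpan f i (n+1) ε) / n : ℝ) : EReal) := by
    apply Filter.limsup_le_limsup (Filter.Eventually.of_forall fun n => ?_)
    have hlog : Real.log (rSpan f (i+1) n ε) ≤ Real.log (rSpan f i (n+1) ε) :=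
      Real.log_le_log (rSpan_real_pos f (i+1) n hε)
        (by exact_mod_cast rSpan_succ_le f i n hε)
    rcases Nat.eq_zero_or_pos n with rfl | hn
    · simp
    · have : (0:ℝ) < n := by exact_mod_cast hn
      exact EReal.coe_le_coe_iff.2 ((div_le_div_iff_of_pos_right this).2 hlog)
  exact step1.trans (aux_limsup_shift_div_le (u := fun n => Real.log (rSpan f i n ε)) fun n => log_rSpan_nonneg f i n hε)

lemma exists_rGrowth_le (f : ℤ → M ≃ₜ M) (i : ℤ) {ε : ℝ} (hε : 0 < ε) :
    ∃ ε' : ℝ, 0 < ε' ∧ rGrowth f i ε ≤ rGrowth f (i+1) ε' := by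
  obtain ⟨ε', hε', hle⟩ := exists_rSpan_ge f i hε
  refine ⟨ε', hε', ?_⟩
  have e2 : rGrowth f i ε =
      atTop.limsup fun n : ℕ => ((Real.log (rSpan f i (n+2) ε) / (n+2 : ℕ) : ℝ) : EReal) := by
    rw [rGrowth]
    exact (Filter.limsup_nat_add
      (fun n : ℕ => ((Real.log (rSpan f i n ε) / n : ℝ) : EReal)) 2).symm
  have e1 : rGrowth f (i+1) ε' =
      atTop.limsup fun n : ℕ =>
        ((Real.log (rSpan f (i+1) (n+1) ε') / (n+1 : ℕ) : ℝ) : EReal) := by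
    rw [rGrowth]
    exact (Filter.limsup_nat_add
      (fun n : ℕ => ((Real.log (rSpan f (i+1) n ε') / n : ℝ) : EReal)) 1).symm
  rw [e1, e2]
  apply Filter.limsup_le_limsup (Filter.Eventually.of_forall fun n => ?_)
  have hlog : Real.log (rSpan f i (n+2) ε) ≤ Real.log (rSpan f (i+1) (n+1) ε') :=
    Real.log_le_log (rSpan_real_pos f i (n+2) hε) (by exact_mod_cast hle n)
  have c2 : (0:ℝ) < ((n+2 : ℕ) : ℝ) := by positivity
  have c1 : (0:ℝ) < ((n+1 : ℕ) : ℝ) := by positivity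
  have step : Real.log (rSpan f i (n+2) ε) / ((n+2:ℕ) : ℝ) ≤
      Real.log (rSpan f (i+1) (n+1) ε') / ((n+1:ℕ) : ℝ) :=
    le_trans ((div_le_div_iff_of_pos_right c2).2 hlog)
      (div_le_div_of_nonneg_left (log_rSpan_nonneg f (i+1) (n+1) hε') c1 (by push_cast; linarith))
  exact EReal.coe_le_coe_iff.2 step

lemma nsEntropy_succ (f : ℤ → M ≃ₜ M) (i : ℤ) : nsEntropy f i = nsEntropy f (i+1) := by
  apply le_antisymm
  · refine iSup₂_le fun ε hε => ?_
    obtain ⟨ε', hε', hle⟩ := exists_rGrowth_le f i hε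
    exact hle.trans (le_iSup_of_le ε' (le_iSup_of_le hε' le_rfl))
  · refine iSup₂_le fun ε hε => ?_
    exact (rGrowth_succ_le f i hε).trans (le_iSup_of_le ε (le_iSup_of_le hε le_rfl))

end Aux

/-- for every non-autonomous dynamical system `f` on a compact metric space `M`
and all `i, j ∈ ℤ`, `H_i(f) = H_j(f)`: the sequence `(H_i(f))_{i ∈ ℤ}` is constant. -/
theorem nsEntropy_eq_nsEntropy [MetricSpace M] [CompactSpace M]
    (f : ℤ → M ≃ₜ M) (i j : ℤ) :
    nsEntropy f i = nsEntropy f j := by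
  rcases isEmpty_or_nonempty M with hM | hM
  · have hr : ∀ (k : ℤ) (n : ℕ) (ε : ℝ), rSpan f k n ε = 0 := fun k n ε =>
      Nat.eq_zero_of_le_zero (rSpan_le f k n ε ∅ (fun x => (IsEmpty.false x).elim))
    simp only [nsEntropy, rGrowth, hr]
  · have key : ∀ k : ℤ, nsEntropy f k = nsEntropy f 0 := by
      intro k
      induction k using Int.induction_on with
      | zero => rfl
      | succ m ih => rw [← nsEntropy_succ f (m : ℤ)]; exact ih
      | pred m ih =>
        have := nsEntropy_succ f (-(m:ℤ) - 1)
        rw [sub_add_cancel] at this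
        rw [this]; exact ih
    rw [key i, key j]
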